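/- For even k ≥ 4 and odd t ≥ 3, the tensor product C_t × C_k of a t-cycle and a k-cycle decomposes into two Hamilton cycles: the graph G formed by the 1-factors F_1(A_{2i},A_{2i+1}) for 0 ≤ i ≤ (t−1)/2 together with F_{k−1}(A_{2i+1},A_{2i+2}) for 0 ≤ i ≤ (t−3)/2 is a single cycle of length kt, and similarly for the complementary choice (distances k−1 and 1 swapped), and these two Hamilton cycles partition the edge set of C_t × C_k. -/

import Mathlib

open SimpleGraph

/-- Tensor (categorical) product of simple graphs. -/
def tensorProd {α β : Type*} (G : SimpleGraph α) (H : SimpleGraph β) :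
    SimpleGraph (α × β) where
  Adj x y := G.Adj x.1 y.1 ∧ H.Adj x.2 y.2
  symm := ⟨fun x y h => ⟨h.1.symm, h.2.symm⟩⟩
  loopless := ⟨fun x h => G.loopless.irrefl x.1 h.1⟩

/-- The cycle graph `C_k` on vertex set `Fin k` (for `k ≥ 3`). -/
def cycleG (k : ℕ) : SimpleGraph (Fin k) :=
  SimpleGraph.fromRel (fun x y => (x.val + 1) % k = y.val)

/-- `H` restricted to `S` is a disjoint union of `k`-cycles covering exactly the
vertices of `S`: the support of `H` is `S`, every vertex of `S` has exactly two
neighbours, and every connected component meeting `S` has exactly `k` vertices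
(a finite connected 2-regular graph on `k` vertices is a `k`-cycle). -/
def IsUnionOfCycles {V : Type*} (H : SimpleGraph V) (S : Set V) (k : ℕ) : Prop :=
  (∀ v, v ∈ S ↔ (H.neighborSet v).Nonempty) ∧
  (∀ v ∈ S, (H.neighborSet v).ncard = 2) ∧
  (∀ v ∈ S, {w | H.Reachable v w}.ncard = k)

/-- The subgraph `G` of `C_t × C_k` using the matchings of distance `1` from
`A_{2i}` to `A_{2i+1}` and distance `k-1` from `A_{2i+1}` to `A_{2i+2}`. -/
def Gfac (t k : ℕ) : SimpleGraph (Fin t × Fin k) :=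
  SimpleGraph.fromRel (fun x y =>
    (x.1.val + 1) % t = y.1.val ∧
    ((Even x.1.val ∧ (x.2.val + 1) % k = y.2.val) ∨
     (¬ Even x.1.val ∧ (x.2.val + (k - 1)) % k = y.2.val)))

/-- The complementary subgraph `H` of `C_t × C_k` (distances `k-1` and `1`
swapped). -/
def Hfac (t k : ℕ) : SimpleGraph (Fin t × Fin k) :=
  SimpleGraph.fromRel (fun x y =>
    (x.1.val + 1) % t = y.1.val ∧
    ((Even x.1.val ∧ (x.2.val + (k - 1)) % k = y.2.val) ∨
     (¬ Even x.1.val ∧ (x.2.val + 1) % k = y.2.val)))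

/- ## Auxiliary development -/

lemma succ_mod_cases (x n : ℕ) (h : x < n) :
    ((x + 1) % n = x + 1 ∧ x + 1 < n) ∨ ((x + 1) % n = 0 ∧ x + 1 = n) := by
  rcases Nat.lt_or_ge (x + 1) n with h' | h'
  · exact Or.inl ⟨Nat.mod_eq_of_lt h', h'⟩
  · have hx : x + 1 = n := by omega
    exact Or.inr ⟨by rw [hx, Nat.mod_self], hx⟩

lemma pred_mod_cases (x n : ℕ) (h : x < n) (hn : 1 ≤ n) :
    ((x + (n - 1)) % n = x - 1 ∧ 1 ≤ x) ∨ ((x + (n - 1)) % n = n - 1 ∧ x = 0) := by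
  rcases Nat.eq_zero_or_pos x with hx | hx
  · subst hx
    exact Or.inr ⟨by rw [Nat.zero_add]; exact Nat.mod_eq_of_lt (by omega), rfl⟩
  · left
    refine ⟨?_, hx⟩
    have : x + (n - 1) = (x - 1) + n := by omega
    rw [this, Nat.add_mod_right, Nat.mod_eq_of_lt (by omega)]

def nxt (t k : ℕ) [NeZero t] (s : Fin k) (p : Fin t × Fin k) : Fin t × Fin k :=
  (p.1 + 1, if Even p.1.val then p.2 + s else p.2 - s)

def prv (t k : ℕ) [NeZero t] (s : Fin k) (p : Fin t × Fin k) : Fin t × Fin k :=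
  (p.1 - 1, if Even (p.1 - 1).val then p.2 - s else p.2 + s)

open scoped Fin.NatCast Fin.IntCast Fin.CommRing

variable {t k : ℕ} [NeZero t] [NeZero k]

lemma prv_nxt (s : Fin k) (p : Fin t × Fin k) : prv t k s (nxt t k s p) = p := by
  simp only [prv, nxt, add_sub_cancel_right]
  split_ifs <;> simp only [add_sub_cancel_right, sub_add_cancel]

lemma nxt_prv (s : Fin k) (p : Fin t × Fin k) : nxt t k s (prv t k s p) = p := by
  simp only [prv, nxt, sub_add_cancel]
  split_ifs <;> simp only [add_sub_cancel_right, sub_add_cancel]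

lemma val_add_one {n : ℕ} [NeZero n] (a : Fin n) : (a + 1).val = (a.val + 1) % n := by
  simp [Fin.val_add, Fin.val_one', Nat.mod_add_mod]

lemma val_sub_one {n : ℕ} [NeZero n] (hn : 2 ≤ n) (a : Fin n) :
    (a - 1).val = (a.val + (n - 1)) % n := by
  rw [Fin.sub_def]
  simp [Fin.val_one', Nat.mod_eq_of_lt (show 1 < n by omega), Nat.add_comm]

lemma nxt_ne (ht2 : 2 ≤ t) (s : Fin k) (p : Fin t × Fin k) : nxt t k s p ≠ p := by
  intro h
  have h1 : (p.1 + 1).val = p.1.val := congrArg (fun q => q.1.val) h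
  rw [val_add_one] at h1
  rcases succ_mod_cases p.1.val t p.1.isLt with ⟨e, _⟩ | ⟨e, _⟩ <;> omega

lemma nxt_fst_ne_prv_fst (ht3 : 3 ≤ t) (s : Fin k) (p : Fin t × Fin k) :
    nxt t k s p ≠ prv t k s p := by
  intro h
  have h1 : (p.1 + 1).val = (p.1 - 1).val := congrArg (fun q => q.1.val) h
  rw [val_add_one, val_sub_one (by omega)] at h1
  rcases succ_mod_cases p.1.val t p.1.isLt with ⟨e, he⟩ | ⟨e, he⟩ <;>
    rcases pred_mod_cases p.1.val t p.1.isLt (by omega) with ⟨e', he'⟩ | ⟨e', he'⟩ <;>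
    omega

section Key

variable (G : SimpleGraph (Fin t × Fin k)) (s : Fin k)
variable (hadj : ∀ x y, G.Adj x y ↔ (y = nxt t k s x ∨ x = nxt t k s y))

include hadj

lemma neigh_eq (v : Fin t × Fin k) :
    G.neighborSet v = {nxt t k s v, prv t k s v} := by
  ext w
  simp only [mem_neighborSet, hadj, Set.mem_insert_iff, Set.mem_singleton_iff]
  constructor
  · rintro (h | h)
    · exact Or.inl h
    · right; rw [h, prv_nxt]
  · rintro (h | h)
    · exact Or.inl h
    · right; rw [h, nxt_prv]

lemma reach_nxt (p : Fin t × Fin k) : G.Reachable p (nxt t k s p) :=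
  (SimpleGraph.Adj.reachable ((hadj p _).2 (Or.inl rfl)))

lemma reach_iter (m : ℕ) (p : Fin t × Fin k) : G.Reachable p ((nxt t k s)^[m] p) := by
  induction m with
  | zero => exact SimpleGraph.Reachable.refl p
  | succ n ih =>
      rw [Function.iterate_succ_apply']
      exact ih.trans (reach_nxt G s hadj _)

omit hadj

lemma iter_formula (a : ℕ) (ha : a ≤ t) (z : Fin k) :
    (nxt t k s)^[a] ((0 : Fin t), z) = ((a : Fin t), if Even a then z else z + s) := by
  induction a with
  | zero => simp
  | succ n ih =>
      have hn : n < t := by omega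
      rw [Function.iterate_succ_apply', ih (by omega)]
      have hval : ((n : Fin t)).val = n := by
        rw [Fin.val_natCast, Nat.mod_eq_of_lt hn]
      simp only [nxt, hval, Prod.mk.injEq]
      constructor
      · -- first components
        apply Fin.ext
        rw [val_add_one, hval, Fin.val_natCast]
      · by_cases he : Even n
        · rw [if_pos he, if_pos he, if_neg (by simpa using he.add_one)]
        · rw [if_neg he, if_neg he, if_pos (by simpa using (Nat.not_even_iff_odd.1 he).add_one),
            add_sub_cancel_right]

end Key

section Key2

variable (G : SimpleGraph (Fin t × Fin k)) (s : Fin k)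
variable (hadj : ∀ x y, G.Adj x y ↔ (y = nxt t k s x ∨ x = nxt t k s y))

include hadj

lemma reach_step (ht : Odd t) (z : Fin k) :
    G.Reachable ((0 : Fin t), z) ((0 : Fin t), z + s) := by
  have h := iter_formula (t := t) (k := k) (s := s) t le_rfl z
  rw [if_neg (by simpa using ht), Fin.natCast_self] at h
  have := reach_iter G s hadj t ((0 : Fin t), z)
  rwa [h] at this

lemma reach_shift (ht : Odd t) (m : ℕ) (z : Fin k) :
    G.Reachable ((0 : Fin t), z) ((0 : Fin t), z + (m : Fin k) * s) := by
  induction m generalizing z with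
  | zero => simpa using SimpleGraph.Reachable.refl _
  | succ n ih =>
      have h1 := reach_step G s hadj ht z
      have h2 := ih (z + s)
      have : z + s + (n : Fin k) * s = z + ((n+1 : ℕ) : Fin k) * s := by
        push_cast
        ring
      rw [this] at h2
      exact h1.trans h2

lemma reach_all (ht : Odd t) (hs : s = 1 ∨ s = -1) (w : Fin t × Fin k) :
    G.Reachable ((0 : Fin t), (0 : Fin k)) w := by
  obtain ⟨i, zz⟩ := w
  have hss : s * s = 1 := by rcases hs with h | h <;> rw [h] <;> ring
  set c : Fin k := if Even i.val then 0 else s with hc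
  have h1 : G.Reachable ((0 : Fin t), (0 : Fin k)) ((0 : Fin t), zz - c) := by
    have := reach_shift G s hadj ht (((zz - c) * s).val) 0
    rwa [Fin.cast_val_eq_self, mul_assoc, hss, mul_one, zero_add] at this
  have h2 : (nxt t k s)^[i.val] ((0 : Fin t), zz - c) = (i, zz) := by
    rw [iter_formula s i.val (le_of_lt i.isLt)]
    simp only [Fin.cast_val_eq_self]
    by_cases he : Even i.val
    · rw [if_pos he, hc, if_pos he, sub_zero]
    · rw [if_neg he, hc, if_neg he, sub_add_cancel]
  have h3 := reach_iter G s hadj i.val ((0 : Fin t), zz - c)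
  rw [h2] at h3
  exact h1.trans h3

lemma key (ht3 : 3 ≤ t) (hk2 : 2 ≤ k) (ht : Odd t) (hs : s = 1 ∨ s = -1) :
    IsUnionOfCycles G Set.univ (k * t) := by
  refine ⟨fun v => ?_, fun v _ => ?_, fun v _ => ?_⟩
  · simp only [Set.mem_univ, true_iff]
    exact ⟨nxt t k s v, (hadj v _).2 (Or.inl rfl)⟩
  · rw [neigh_eq G s hadj v, Set.ncard_pair (nxt_fst_ne_prv_fst ht3 s v)]
  · have huniv : {w | G.Reachable v w} = Set.univ := by
      ext w
      simp only [Set.mem_setOf_eq, Set.mem_univ, iff_true]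
      exact ((reach_all G s hadj ht hs v).symm).trans (reach_all G s hadj ht hs w)
    rw [huniv, Set.ncard_univ, Nat.card_eq_fintype_card, Fintype.card_prod,
      Fintype.card_fin, Fintype.card_fin, mul_comm]

end Key2

lemma grel_iff (ht2 : 2 ≤ t) (hk2 : 2 ≤ k) (x y : Fin t × Fin k) :
    ((x.1.val + 1) % t = y.1.val ∧
      ((Even x.1.val ∧ (x.2.val + 1) % k = y.2.val) ∨
       (¬ Even x.1.val ∧ (x.2.val + (k - 1)) % k = y.2.val))) ↔ y = nxt t k 1 x := by
  have h1 : ((x.1.val + 1) % t = y.1.val) ↔ y.1 = x.1 + 1 := by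
    rw [Fin.ext_iff, val_add_one]; exact eq_comm
  by_cases he : Even x.1.val
  · have h2 : ((x.2.val + 1) % k = y.2.val) ↔ y.2 = x.2 + 1 := by
      rw [Fin.ext_iff, val_add_one]; exact eq_comm
    simp [nxt, he, Prod.ext_iff, h1, h2]
  · have h2 : ((x.2.val + (k - 1)) % k = y.2.val) ↔ y.2 = x.2 - 1 := by
      rw [Fin.ext_iff, val_sub_one hk2]; exact eq_comm
    simp [nxt, he, Prod.ext_iff, h1, h2]

lemma hrel_iff (ht2 : 2 ≤ t) (hk2 : 2 ≤ k) (x y : Fin t × Fin k) :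
    ((x.1.val + 1) % t = y.1.val ∧
      ((Even x.1.val ∧ (x.2.val + (k - 1)) % k = y.2.val) ∨
       (¬ Even x.1.val ∧ (x.2.val + 1) % k = y.2.val))) ↔ y = nxt t k (-1) x := by
  have h1 : ((x.1.val + 1) % t = y.1.val) ↔ y.1 = x.1 + 1 := by
    rw [Fin.ext_iff, val_add_one]; exact eq_comm
  by_cases he : Even x.1.val
  · have h2 : ((x.2.val + (k - 1)) % k = y.2.val) ↔ y.2 = x.2 + (-1) := by
      rw [← sub_eq_add_neg, Fin.ext_iff, val_sub_one hk2]; exact eq_comm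
    simp [nxt, he, Prod.ext_iff, h1, h2]
  · have h2 : ((x.2.val + 1) % k = y.2.val) ↔ y.2 = x.2 - (-1) := by
      rw [sub_neg_eq_add, Fin.ext_iff, val_add_one]; exact eq_comm
    simp [nxt, he, Prod.ext_iff, h1, h2]

lemma gfac_adj (ht2 : 2 ≤ t) (hk2 : 2 ≤ k) (x y : Fin t × Fin k) :
    (Gfac t k).Adj x y ↔ (y = nxt t k 1 x ∨ x = nxt t k 1 y) := by
  rw [Gfac, fromRel_adj, grel_iff ht2 hk2, grel_iff ht2 hk2]
  constructor
  · rintro ⟨-, h⟩; exact h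
  · intro h
    refine ⟨?_, h⟩
    rcases h with h | h
    · rw [h]; exact fun hx => nxt_ne ht2 1 x hx.symm
    · rw [h]; exact nxt_ne ht2 1 y

lemma hfac_adj (ht2 : 2 ≤ t) (hk2 : 2 ≤ k) (x y : Fin t × Fin k) :
    (Hfac t k).Adj x y ↔ (y = nxt t k (-1) x ∨ x = nxt t k (-1) y) := by
  rw [Hfac, fromRel_adj, hrel_iff ht2 hk2, hrel_iff ht2 hk2]
  constructor
  · rintro ⟨-, h⟩; exact h
  · intro h
    refine ⟨?_, h⟩
    rcases h with h | h
    · rw [h]; exact fun hx => nxt_ne ht2 (-1) x hx.symm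
    · rw [h]; exact nxt_ne ht2 (-1) y


lemma succ_ne {n : ℕ} [NeZero n] (hn : 2 ≤ n) (a : Fin n) : a + 1 ≠ a := by
  intro h
  have h1 : (a + 1).val = a.val := congrArg Fin.val h
  rw [val_add_one] at h1
  rcases succ_mod_cases a.val n a.isLt with ⟨e, _⟩ | ⟨e, _⟩ <;> omega

lemma succ_succ_ne {n : ℕ} [NeZero n] (hn : 3 ≤ n) (a : Fin n) : a + 1 + 1 ≠ a := by
  intro h
  have h1 : (a + 1 + 1).val = a.val := congrArg Fin.val h
  rw [val_add_one, val_add_one] at h1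
  rcases succ_mod_cases a.val n a.isLt with ⟨e, he⟩ | ⟨e, he⟩ <;>
    rw [e] at h1 <;>
    [rcases succ_mod_cases (a.val + 1) n he with ⟨e', he'⟩ | ⟨e', he'⟩;
     rcases succ_mod_cases 0 n (by omega) with ⟨e', he'⟩ | ⟨e', he'⟩] <;> omega

lemma succ_ne_pred {n : ℕ} [NeZero n] (hn : 3 ≤ n) (a : Fin n) : a + 1 ≠ a - 1 := by
  intro h
  have h2 : a + 1 + 1 = a := by rw [h, sub_add_cancel]
  exact succ_succ_ne hn a h2

lemma cyc_adj {n : ℕ} [NeZero n] (hn : 2 ≤ n) (a b : Fin n) :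
    (cycleG n).Adj a b ↔ (b = a + 1 ∨ a = b + 1) := by
  rw [cycleG, SimpleGraph.fromRel_adj]
  have h1 : ((a.val + 1) % n = b.val) ↔ b = a + 1 := by
    rw [Fin.ext_iff, val_add_one]; exact eq_comm
  have h2 : ((b.val + 1) % n = a.val) ↔ a = b + 1 := by
    rw [Fin.ext_iff, val_add_one]; exact eq_comm
  rw [h1, h2]
  constructor
  · rintro ⟨-, h⟩; exact h
  · intro h
    refine ⟨?_, h⟩
    rcases h with h | h
    · rw [h]; exact fun hx => succ_ne hn a hx.symm
    · rw [h]; exact succ_ne hn b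

lemma sub_one_eq_iff {n : ℕ} [NeZero n] (a b : Fin n) : a = b - 1 ↔ b = a + 1 := by
  constructor
  · intro h; rw [h, sub_add_cancel]
  · intro h; rw [h, add_sub_cancel_right]

lemma tensor_iff (ht3 : 3 ≤ t) (hk3 : 3 ≤ k) (x y : Fin t × Fin k) :
    (tensorProd (cycleG t) (cycleG k)).Adj x y ↔
      (y = nxt t k 1 x ∨ x = nxt t k 1 y ∨ y = nxt t k (-1) x ∨ x = nxt t k (-1) y) := by
  show ((cycleG t).Adj x.1 y.1 ∧ (cycleG k).Adj x.2 y.2) ↔ _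
  rw [cyc_adj (by omega), cyc_adj (by omega)]
  simp only [nxt, Prod.ext_iff, sub_neg_eq_add, ← sub_eq_add_neg]
  by_cases he : Even x.1.val <;> by_cases he' : Even y.1.val <;>
    simp only [he, he', if_true, if_false, if_pos, if_neg, not_false_iff, ite_true, ite_false] <;>
    simp only [sub_one_eq_iff] <;>
    tauto

/-- For even `k ≥ 4` and odd `t ≥ 3`, both `G` and `H` are Hamilton cycles
(single cycles of length `kt`) of `C_t × C_k`, they are edge-disjoint, and
together they partition the edge set of `C_t × C_k`. -/
theorem stmt12 (t k : ℕ) (hk : Even k) (hk4 : 4 ≤ k) (ht : Odd t) (ht3 : 3 ≤ t) :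
    IsUnionOfCycles (Gfac t k) Set.univ (k * t) ∧
    IsUnionOfCycles (Hfac t k) Set.univ (k * t) ∧
    Gfac t k ⊓ Hfac t k = ⊥ ∧
    Gfac t k ⊔ Hfac t k = tensorProd (cycleG t) (cycleG k) := by
  haveI : NeZero t := ⟨by omega⟩
  haveI : NeZero k := ⟨by omega⟩
  have hgadj := gfac_adj (t := t) (k := k) (by omega) (by omega)
  have hhadj := hfac_adj (t := t) (k := k) (by omega) (by omega)
  refine ⟨key _ _ hgadj ht3 (by omega) ht (Or.inl rfl),
          key _ _ hhadj ht3 (by omega) ht (Or.inr rfl), ?_, ?_⟩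
  · ext x y
    simp only [inf_adj, bot_adj, iff_false]
    rintro ⟨hg, hh⟩
    rw [hgadj] at hg
    rw [hhadj] at hh
    have hdiff : ∀ p : Fin t × Fin k, nxt t k 1 p ≠ nxt t k (-1) p := by
      intro p h
      have h2 : (nxt t k 1 p).2 = (nxt t k (-1) p).2 := congrArg Prod.snd h
      simp only [nxt, sub_neg_eq_add, ← sub_eq_add_neg] at h2
      by_cases he : Even p.1.val
      · rw [if_pos he, if_pos he] at h2
        exact succ_ne_pred (by omega) p.2 h2
      · rw [if_neg he, if_neg he] at h2
        exact succ_ne_pred (by omega) p.2 h2.symm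
    have hfst : ∀ p q : Fin t × Fin k, q = nxt t k 1 p → p = nxt t k (-1) q → False := by
      intro p q h1 h2
      have e1 : q.1 = p.1 + 1 := congrArg Prod.fst h1
      have e2 : p.1 = q.1 + 1 := congrArg Prod.fst h2
      rw [e1] at e2
      exact succ_succ_ne ht3 p.1 e2.symm
    have hfst' : ∀ p q : Fin t × Fin k, q = nxt t k (-1) p → p = nxt t k 1 q → False := by
      intro p q h1 h2
      have e1 : q.1 = p.1 + 1 := congrArg Prod.fst h1
      have e2 : p.1 = q.1 + 1 := congrArg Prod.fst h2
      rw [e1] at e2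
      exact succ_succ_ne ht3 p.1 e2.symm
    rcases hg with hg | hg <;> rcases hh with hh | hh
    · exact hdiff x (hg ▸ hh ▸ rfl)
    · exact hfst' y x hh hg  -- y = nxt 1 x, x = nxt (-1) y ... check
    · exact hfst y x hg hh
    · exact hdiff y (hg ▸ hh ▸ rfl)
  · ext x y
    rw [sup_adj, hgadj, hhadj, tensor_iff ht3 (by omega)]
    tauto
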